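/- Suppose nonnegative reals $\bar{q}, \bar{c}_C, \bar{c}_I, \bar{c}_{DC}$ satisfy $n = \bar{q} + \bar{c}_C + \bar{c}_I + \bar{c}_{DC}$, the charge balance $\bar{c}_C r_c = (n - \bar{c}_C - \bar{c}_I) r_d$, the charger constraint $m \geq \bar{c}_C + \left(\frac{r_c \tau_2 \bar{c}_C}{p^\star \bar{c}_{DC}}\right)^2$ (interpreted as $m \geq \bar{c}_C$ when $\bar{c}_{DC}$ makes the second term undefined), and $\bar{q} \geq T_R \alpha \lambda$. Then $m \geq r T_R \alpha \lambda$ where $r = r_d/r_c$. -/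
import Mathlib


theorem first_order_charger_lower_bound
    (n m q cC cI cDC rc rd TR α lam τ2 pstar : ℝ)
    (hq : 0 ≤ q) (hcC : 0 ≤ cC) (hcI : 0 ≤ cI) (hcDC : 0 ≤ cDC)
    (hrc : 0 < rc) (hrd : 0 < rd) (hTR : 0 < TR) (hα : 0 < α) (hlam : 0 < lam)
    (hτ2 : 0 < τ2) (hp : 0 < pstar)
    (hsum : n = q + cC + cI + cDC)
    (hbal : cC * rc = (n - cC - cI) * rd)
    (hm : m ≥ cC + (rc * τ2 * cC / (pstar * cDC)) ^ 2)
    (hqge : q ≥ TR * α * lam) :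
    m ≥ (rd / rc) * TR * α * lam := by
  have hbal' : cC * rc = (q + cDC) * rd := by rw [hbal, hsum]; ring
  have h1 : cC * rc ≥ (TR * α * lam) * rd := by
    rw [hbal']
    have : q + cDC ≥ TR * α * lam := by linarith
    nlinarith
  have h2 : cC ≥ (rd / rc) * TR * α * lam := by
    rw [ge_iff_le, div_mul_eq_mul_div, div_mul_eq_mul_div, div_mul_eq_mul_div, div_le_iff₀ hrc]
    nlinarith
  have hsq : (rc * τ2 * cC / (pstar * cDC)) ^ 2 ≥ 0 := sq_nonneg _
  linarith
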